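/- (Sensitive dependence on initial conditions) Let f : ℝ × ℝ → ℝ be continuous and 1-periodic in the time variable, and suppose the equation x' = f(t,x) admits a solution x with x(t+2) = x(t) for all t ∈ ℝ and x(t₁+1) ≠ x(t₁) for some t₁ ∈ ℝ. Then there exists a compact subset W of C(ℝ,ℝ), consisting of solutions of x' = f(t,x) and invariant under the time-one shift ψ₁, such that ψ = ψ₁|_W is sensitive with respect to initial data on W: there exists δ > 0 such that for every w ∈ W and every ε > 0 there exist v ∈ W with ρ(v,w) < ε and a positive integer n with ρ(ψⁿ(v), ψⁿ(w)) ≥ δ. -/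

import Mathlib

/-- `x` is a (classical) solution of the ODE `x' = f(t,x)` on the whole real line. -/
def IsSolution (f : ℝ × ℝ → ℝ) (x : ℝ → ℝ) : Prop :=
  ∀ t : ℝ, HasDerivAt x (f (t, x t)) t

/-- The time-one shift `ψ₁` on `C(ℝ, ℝ)`: `shiftOne w = w (· + 1)`. -/
def shiftOne (w : C(ℝ, ℝ)) : C(ℝ, ℝ) :=
  w.comp ⟨fun t => t + 1, by continuity⟩

/-- `ϑ_m(f,g) = max {|f t - g t| : t ∈ [-m, m]}`. -/
noncomputable def theta (m : ℕ) (f g : C(ℝ, ℝ)) : ℝ :=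
  sSup ((fun t => |f t - g t|) '' Set.Icc (-(m : ℝ)) (m : ℝ))

/-- The metric `ρ(f,g) = Σ_{m=1}^∞ 2^{-m} ϑ_m(f,g)/(1 + ϑ_m(f,g))` of uniform
convergence on compact sets. -/
noncomputable def rho (f g : C(ℝ, ℝ)) : ℝ :=
  ∑' m : ℕ, (theta (m + 1) f g / (1 + theta (m + 1) f g)) / 2 ^ (m + 1)

/-! ### Auxiliary lemmas about `theta` and `rho` -/

lemma theta_nonneg (m : ℕ) (v w : C(ℝ, ℝ)) : 0 ≤ theta m v w :=
  Real.sSup_nonneg (by rintro y ⟨t, -, rfl⟩; positivity)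

noncomputable def rterm (v w : C(ℝ, ℝ)) (m : ℕ) : ℝ :=
  (theta (m + 1) v w / (1 + theta (m + 1) v w)) / 2 ^ (m + 1)

lemma rho_eq (v w : C(ℝ, ℝ)) : rho v w = ∑' m, rterm v w m := rfl

lemma rterm_nonneg (v w : C(ℝ, ℝ)) (m : ℕ) : 0 ≤ rterm v w m := by
  have h := theta_nonneg (m+1) v w
  unfold rterm
  positivity

lemma rterm_le (v w : C(ℝ, ℝ)) (m : ℕ) : rterm v w m ≤ (1/2)^(m+1) := by
  have h := theta_nonneg (m+1) v w
  unfold rterm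
  rw [one_div_pow]
  apply div_le_div_of_nonneg_right ?_ (by positivity)
  · exact div_le_one_of_le₀ (by linarith) (by linarith)

lemma summable_rterm (v w : C(ℝ, ℝ)) : Summable (rterm v w) :=
  Summable.of_nonneg_of_le (rterm_nonneg v w) (rterm_le v w)
    ((summable_geometric_of_lt_one (by norm_num) (by norm_num)).comp_injective
      (add_left_injective 1))

lemma rho_le_of_eqOn (v w : C(ℝ, ℝ)) (M : ℕ)
    (h : Set.EqOn v w (Set.Icc (-(M:ℝ)) M)) : rho v w ≤ (1/2)^M := by
  have hz : ∀ m < M, rterm v w m = 0 := by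
    intro m hm
    have hmM : (m:ℝ) + 1 ≤ M := by exact_mod_cast hm
    have hsub : Set.Icc (-((m:ℝ)+1)) ((m:ℝ)+1) ⊆ Set.Icc (-(M:ℝ)) M :=
      Set.Icc_subset_Icc (by linarith) (by linarith)
    have ht : theta (m+1) v w = 0 := by
      refine le_antisymm (Real.sSup_le ?_ le_rfl) (theta_nonneg _ _ _)
      rintro y ⟨t, ht, rfl⟩
      push_cast at ht
      simp only
      rw [h (hsub ht)]
      simp
    simp [rterm, ht]
  rw [rho_eq, ← Summable.sum_add_tsum_nat_add M (summable_rterm v w)]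
  have h1 : ∑ i ∈ Finset.range M, rterm v w i = 0 :=
    Finset.sum_eq_zero fun i hi => hz i (Finset.mem_range.1 hi)
  have h2 : ∑' i : ℕ, rterm v w (i + M) ≤ ∑' i : ℕ, (1/2:ℝ)^(i+M+1) := by
    refine Summable.tsum_le_tsum (fun i => rterm_le v w _)
      ((summable_rterm v w).comp_injective (add_left_injective M)) ?_
    exact (summable_geometric_of_lt_one (by norm_num) (by norm_num)).comp_injective
      (fun a b hab => by omega)
  have h3 : ∑' i : ℕ, (1/2:ℝ)^(i+M+1) = (1/2)^M := by
    have he : ∀ i : ℕ, (1/2:ℝ)^(i+M+1) = (1/2)^(M) * (1/2) * (1/2)^i := fun i => by ring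
    simp_rw [he]
    rw [tsum_mul_left, tsum_geometric_two]
    ring
  rw [h1, zero_add]
  linarith [h2, h3.le]

lemma le_rho (v w : C(ℝ, ℝ)) (m : ℕ) : rterm v w m ≤ rho v w :=
  Summable.le_tsum (summable_rterm v w) m (fun j _ => rterm_nonneg v w j)

/-! ### Spliced solutions -/

noncomputable def spl (x : ℝ → ℝ) (t₀ : ℝ) (s : ℤ → Bool) : ℝ → ℝ :=
  fun t => if s ⌊t - t₀⌋ then x t else x (t + 1)

section
variable {f : ℝ × ℝ → ℝ} {x : ℝ → ℝ} {t₀ : ℝ}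

lemma sol_shift (hx : IsSolution f x) (hper : ∀ t x : ℝ, f (t + 1, x) = f (t, x)) :
    ∀ t : ℝ, HasDerivAt (fun u => x (u + 1)) (f (t, x (t + 1))) t := by
  intro t
  have h1 : HasDerivAt (fun u : ℝ => u + 1) 1 t := (hasDerivAt_id t).add_const 1
  have := (hx (t + 1)).comp t h1
  simpa [hper, Function.comp_def] using this

lemma floor_eq_of_mem {n : ℤ} {u : ℝ} (h1 : t₀ + n ≤ u) (h2 : u < t₀ + n + 1) :
    ⌊u - t₀⌋ = n :=
  Int.floor_eq_iff.2 ⟨by linarith, by push_cast; linarith⟩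

lemma spl_isSolution (hx : IsSolution f x) (hper : ∀ t x : ℝ, f (t + 1, x) = f (t, x))
    (hg : ∀ n : ℤ, x (t₀ + n + 1) = x (t₀ + n)) (s : ℤ → Bool) :
    IsSolution f (spl x t₀ s) := by
  intro t
  set n : ℤ := ⌊t - t₀⌋ with hn
  have hfl : (n:ℝ) ≤ t - t₀ := Int.floor_le _
  have hfu : t - t₀ < (n:ℝ) + 1 := Int.lt_floor_add_one _
  have hbx : HasDerivAt x (f (t, x t)) t := hx t
  have hbx1 : HasDerivAt (fun u => x (u + 1)) (f (t, x (t + 1))) t := sol_shift hx hper t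
  rcases lt_or_eq_of_le hfl with hlt | heq
  · have hmem : Set.Ioo (t₀ + (n:ℝ)) (t₀ + n + 1) ∈ nhds t :=
      Ioo_mem_nhds (by linarith) (by linarith)
    have hev : ∀ u ∈ Set.Ioo (t₀ + (n:ℝ)) (t₀ + n + 1),
        spl x t₀ s u = (if s n then x u else x (u + 1)) := by
      intro u hu
      unfold spl
      rw [floor_eq_of_mem hu.1.le hu.2]
    have hspl_t : spl x t₀ s t = (if s n then x t else x (t + 1)) := by
      unfold spl; rw [← hn]
    cases hsn : s n with
    | true =>
      have : spl x t₀ s =ᶠ[nhds t] x :=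
        Filter.eventuallyEq_of_mem hmem (fun u hu => by rw [hev u hu, hsn]; simp)
      have := hbx.congr_of_eventuallyEq this
      rwa [show f (t, x t) = f (t, spl x t₀ s t) by rw [hspl_t, hsn]; simp] at this
    | false =>
      have : spl x t₀ s =ᶠ[nhds t] (fun u => x (u + 1)) :=
        Filter.eventuallyEq_of_mem hmem (fun u hu => by rw [hev u hu, hsn]; simp)
      have := hbx1.congr_of_eventuallyEq this
      rwa [show f (t, x (t + 1)) = f (t, spl x t₀ s t) by rw [hspl_t, hsn]; simp] at this
  · have ht : t = t₀ + n := by linarith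
    have hx1t : x (t + 1) = x t := by rw [ht]; exact hg n
    have hspl_t : spl x t₀ s t = x t := by
      unfold spl; rw [← hn]; cases s n <;> simp [hx1t]
    have hbx1' : HasDerivAt (fun u => x (u + 1)) (f (t, x t)) t := by rwa [hx1t] at hbx1
    have hbranch : ∀ b : Bool,
        HasDerivAt (fun u => if b then x u else x (u + 1)) (f (t, x t)) t := by
      intro b; cases b <;> simpa
    have hIci : HasDerivWithinAt (spl x t₀ s) (f (t, x t)) (Set.Ici t) t := by
      have hmem : Set.Ico t (t₀ + n + 1) ∈ nhdsWithin t (Set.Ici t) :=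
        Ico_mem_nhdsGE (by linarith)
      refine ((hbranch (s n)).hasDerivWithinAt).congr_of_eventuallyEq
        (Filter.eventuallyEq_of_mem hmem ?_)
        (by rw [hspl_t]; cases hsn : s n <;> simp [hsn, hx1t])
      intro u hu
      unfold spl
      rw [floor_eq_of_mem (by rw [← ht]; exact hu.1) hu.2]
    have hIic : HasDerivWithinAt (spl x t₀ s) (f (t, x t)) (Set.Iic t) t := by
      have hmem : Set.Ioc (t - 1) t ∈ nhdsWithin t (Set.Iic t) :=
        Ioc_mem_nhdsLE (by linarith)
      refine ((hbranch (s (n-1))).hasDerivWithinAt).congr_of_eventuallyEq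
        (Filter.eventuallyEq_of_mem hmem ?_)
        (by rw [hspl_t]; cases hsn : s (n-1) <;> simp [hsn, hx1t])
      intro u hu
      rcases eq_or_lt_of_le hu.2 with h | h
      · subst h
        rw [hspl_t]; cases hsn : s (n-1) <;> simp [hsn, hx1t]
      · unfold spl
        rw [floor_eq_of_mem (n := n - 1) (by push_cast; linarith [hu.1]) (by push_cast; linarith)]
    have hcomb := hIic.union hIci
    rw [Set.Iic_union_Ici, hasDerivWithinAt_univ] at hcomb
    rwa [← hspl_t] at hcomb

lemma spl_uncurry_continuous (hx : Continuous x)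
    (hg : ∀ n : ℤ, x (t₀ + n + 1) = x (t₀ + n)) :
    Continuous (fun p : (ℤ → Bool) × ℝ => spl x t₀ p.1 p.2) := by
  rw [continuous_iff_continuousAt]
  rintro ⟨a, t⟩
  set n : ℤ := ⌊t - t₀⌋ with hn
  have hfl : (n:ℝ) ≤ t - t₀ := Int.floor_le _
  have hfu : t - t₀ < (n:ℝ) + 1 := Int.lt_floor_add_one _
  rcases lt_or_eq_of_le hfl with hlt | heq
  · have hU : {p : (ℤ → Bool) × ℝ | p.1 n = a n} ∩ ((Set.univ : Set (ℤ → Bool)) ×ˢ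
        Set.Ioo (t₀ + (n:ℝ)) (t₀ + n + 1)) ∈ nhds (a, t) := by
      apply Filter.inter_mem
      · have hopen : IsOpen {p : (ℤ → Bool) × ℝ | p.1 n = a n} := by
          have : Continuous (fun p : (ℤ → Bool) × ℝ => p.1 n) :=
            (continuous_apply n).comp continuous_fst
          exact (isOpen_discrete {a n}).preimage this
        exact hopen.mem_nhds rfl
      · exact prod_mem_nhds Filter.univ_mem (Ioo_mem_nhds (by linarith) (by linarith))
    have hev : (fun p : (ℤ → Bool) × ℝ => spl x t₀ p.1 p.2) =ᶠ[nhds (a, t)]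
        (fun p => if a n then x p.2 else x (p.2 + 1)) := by
      refine Filter.eventuallyEq_of_mem hU ?_
      rintro ⟨s, u⟩ ⟨hs, -, hu⟩
      simp only [Set.mem_setOf_eq] at hs
      unfold spl
      dsimp only
      have hfe : ⌊u - t₀⌋ = n :=
        Int.floor_eq_iff.2 ⟨by push_cast; linarith [hu.1], by push_cast; linarith [hu.2]⟩
      rw [hfe]; simp only [hs]
    have hc : ContinuousAt (fun p : (ℤ → Bool) × ℝ =>
        if a n then x p.2 else x (p.2 + 1)) (a, t) := by
      cases a n <;> simp <;> fun_prop
    exact hc.congr hev.symm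
  · have ht : t = t₀ + n := by linarith
    have hx1t : x (t + 1) = x t := by rw [ht]; exact hg n
    have hval : spl x t₀ a t = x t := by
      unfold spl; rw [← hn]; cases a n <;> simp [hx1t]
    unfold ContinuousAt
    dsimp only
    rw [hval, tendsto_iff_dist_tendsto_zero]
    have hbound : ∀ p : (ℤ → Bool) × ℝ,
        dist (spl x t₀ p.1 p.2) (x t) ≤ dist (x p.2) (x t) + dist (x (p.2 + 1)) (x (t+1)) := by
      rintro ⟨s, u⟩
      unfold spl
      dsimp only
      rw [hx1t]
      by_cases hb : s ⌊u - t₀⌋ = true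
      · rw [if_pos hb]; exact le_add_of_nonneg_right dist_nonneg
      · rw [if_neg hb]; exact le_add_of_nonneg_left dist_nonneg
    refine squeeze_zero (fun _ => dist_nonneg) hbound ?_
    have h1 : Filter.Tendsto (fun p : (ℤ → Bool) × ℝ => dist (x p.2) (x t))
        (nhds (a,t)) (nhds 0) := by
      rw [← tendsto_iff_dist_tendsto_zero]
      exact (hx.comp continuous_snd).continuousAt
    have h2 : Filter.Tendsto (fun p : (ℤ → Bool) × ℝ => dist (x (p.2+1)) (x (t+1)))
        (nhds (a,t)) (nhds 0) := by
      rw [← tendsto_iff_dist_tendsto_zero]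
      exact ((hx.comp (continuous_snd.add continuous_const))).continuousAt
    simpa using h1.add h2

end

/-- the "flip shift" on Bool sequences -/
def fshift (s : ℤ → Bool) : ℤ → Bool := fun n => !(s (n+1))

lemma fshift_iterate_eq_iff (k : ℕ) (s s' : ℤ → Bool) (n : ℤ) :
    ((fshift^[k] s) n = (fshift^[k] s') n) ↔ (s (n + k) = s' (n + k)) := by
  induction k generalizing s s' with
  | zero => simp
  | succ k ih =>
    rw [Function.iterate_succ_apply, Function.iterate_succ_apply, ih]
    have e : n + ((k:ℤ)+1) = (n + k) + 1 := by ring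
    show ((!(s (n + k + 1))) = (!(s' (n + k + 1)))) ↔ (s (n + ((k:ℕ)+1:ℕ)) = s' (n + ((k:ℕ)+1:ℕ)))
    push_cast
    rw [e]
    exact ⟨fun h => Bool.not_inj h, fun h => congrArg (fun b => !b) h⟩

theorem sensitive_dependence
    (f : ℝ × ℝ → ℝ) (hf : Continuous f)
    (hper : ∀ t x : ℝ, f (t + 1, x) = f (t, x))
    (x : ℝ → ℝ) (hx : IsSolution f x)
    (hx2 : ∀ t : ℝ, x (t + 2) = x t)
    (t₁ : ℝ) (ht₁ : x (t₁ + 1) ≠ x t₁) :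
    ∃ W : Set C(ℝ, ℝ), IsCompact W ∧
      (∀ w ∈ W, IsSolution f w) ∧
      shiftOne '' W = W ∧
      ∃ δ : ℝ, 0 < δ ∧
        ∀ w ∈ W, ∀ ε : ℝ, 0 < ε → ∃ v ∈ W, rho v w < ε ∧
          ∃ n : ℕ, 1 ≤ n ∧ δ ≤ rho (shiftOne^[n] v) (shiftOne^[n] w) := by
  have hxc : Continuous x := by
    rw [continuous_iff_continuousAt]; exact fun t => (hx t).continuousAt
  -- find a crossing point t₀
  have hganti : ∀ t : ℝ, x (t + 1 + 1) - x (t + 1) = -(x (t + 1) - x t) := by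
    intro t
    have := hx2 t
    rw [show t + 1 + 1 = t + 2 by ring, this]
    ring
  obtain ⟨t₀, -, ht₀⟩ : ∃ t₀ ∈ Set.Icc t₁ (t₁+1), x (t₀ + 1) - x t₀ = 0 := by
    have hgc : Continuous (fun t => x (t+1) - x t) :=
      (hxc.comp (continuous_id.add continuous_const)).sub hxc
    rcases lt_or_gt_of_ne (sub_ne_zero.2 ht₁) with hneg | hpos
    · have h0 : (0:ℝ) ∈ Set.Icc (x (t₁+1) - x t₁) (x (t₁+1+1) - x (t₁+1)) :=
        ⟨hneg.le, by rw [hganti t₁]; linarith⟩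
      obtain ⟨t₀, ht₀mem, ht₀⟩ := intermediate_value_Icc (by linarith : t₁ ≤ t₁+1)
        (hgc.continuousOn) h0
      exact ⟨t₀, ht₀mem, ht₀⟩
    · have h0 : (0:ℝ) ∈ Set.Icc (x (t₁+1+1) - x (t₁+1)) (x (t₁+1) - x t₁) :=
        ⟨by rw [hganti t₁]; linarith, hpos.le⟩
      obtain ⟨t₀, ht₀mem, ht₀⟩ := intermediate_value_Icc' (by linarith : t₁ ≤ t₁+1)
        (hgc.continuousOn) h0
      exact ⟨t₀, ht₀mem, ht₀⟩
  have hcross0 : x (t₀ + 1) = x t₀ := sub_eq_zero.1 ht₀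
  -- propagation of the crossing
  have hstepup : ∀ t : ℝ, x (t+1) = x t → x ((t+1)+1) = x (t+1) := by
    intro t h
    have := hganti t
    rw [h] at this
    linarith [this]
  have hstepdown : ∀ t : ℝ, x (t+1) = x t → x ((t-1)+1) = x (t-1) := by
    intro t h
    have h2 := hx2 (t-1)
    rw [show t - 1 + 2 = t + 1 by ring] at h2
    rw [show t - 1 + 1 = t by ring]
    rw [← h2, h]
  have hg : ∀ n : ℤ, x (t₀ + n + 1) = x (t₀ + n) := by
    intro n
    refine Int.induction_on n ?_ ?_ ?_
    · simpa using hcross0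
    · intro i ih
      push_cast at ih ⊢
      rw [show t₀ + ((i:ℝ)+1) + 1 = (t₀+i+1)+1 by ring, show t₀ + ((i:ℝ)+1) = (t₀+i)+1 by ring]
      exact hstepup _ ih
    · intro i ih
      push_cast at ih ⊢
      rw [show t₀ + (-(i:ℝ)-1) + 1 = ((t₀ + -(i:ℝ))-1)+1 by ring,
        show t₀ + (-(i:ℝ)-1) = (t₀ + -(i:ℝ))-1 by ring]
      exact hstepdown _ ih
  -- the family of spliced solutions
  have hucont := spl_uncurry_continuous (x := x) (t₀ := t₀) hxc hg
  have hscont : ∀ s : ℤ → Bool, Continuous (spl x t₀ s) := fun s =>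
    hucont.comp (continuous_const.prodMk continuous_id)
  set Φ : (ℤ → Bool) → C(ℝ, ℝ) := fun s => ⟨spl x t₀ s, hscont s⟩ with hΦdef
  have hΦcont : Continuous Φ :=
    ContinuousMap.continuous_of_continuous_uncurry Φ hucont
  have hΦapp : ∀ s t, Φ s t = spl x t₀ s t := fun _ _ => rfl
  -- shift action
  have hshift : ∀ s, shiftOne (Φ s) = Φ (fshift s) := by
    intro s
    refine ContinuousMap.ext fun t => ?_
    show spl x t₀ s (t + 1) = spl x t₀ (fshift s) t
    unfold spl fshift
    have hfe : ⌊t + 1 - t₀⌋ = ⌊t - t₀⌋ + 1 := by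
      rw [show t + 1 - t₀ = (t - t₀) + (1:ℤ) by push_cast; ring, Int.floor_add_intCast]
    rw [hfe]
    cases hb : s (⌊t - t₀⌋ + 1) with
    | false =>
      simp only [Bool.not_false, if_true, if_false, Bool.false_eq_true]
      rw [show t + 1 + 1 = t + 2 by ring, hx2]
    | true => simp
  have hshift_iter : ∀ (k : ℕ) (s), shiftOne^[k] (Φ s) = Φ (fshift^[k] s) := by
    intro k
    induction k with
    | zero => simp
    | succ k ih =>
      intro s
      rw [Function.iterate_succ_apply, hshift, ih, ← Function.iterate_succ_apply]
  refine ⟨Set.range Φ, isCompact_range hΦcont, ?_, ?_, ?_⟩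
  · rintro w ⟨s, rfl⟩
    exact spl_isSolution hx hper hg s
  · -- invariance
    apply Set.eq_of_subset_of_subset
    · rintro v ⟨w, ⟨s, rfl⟩, rfl⟩
      exact ⟨fshift s, (hshift s).symm⟩
    · rintro w ⟨s, rfl⟩
      refine ⟨Φ (fun n => !(s (n-1))), ⟨_, rfl⟩, ?_⟩
      rw [hshift]
      congr 1
      funext n
      simp [fshift, show n + 1 - 1 = n by ring]
  · -- sensitivity
    set c₀ : ℝ := |x (t₁ + 1) - x t₁| with hc₀def
    have hc₀pos : 0 < c₀ := abs_pos.2 (sub_ne_zero.2 ht₁)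
    set m₁ : ℕ := ⌈|t₁|⌉₊ with hm₁def
    have ht₁mem : t₁ ∈ Set.Icc (-((m₁:ℝ)+1)) ((m₁:ℝ)+1) := by
      have h1 : |t₁| ≤ m₁ := Nat.le_ceil _
      constructor <;> [skip; skip] <;> cases abs_le.1 h1 with
      | intro hl hr => linarith
    set n₁ : ℤ := ⌊t₁ - t₀⌋ with hn₁def
    refine ⟨(c₀ / (1 + c₀)) / 2 ^ (m₁ + 1), by positivity, ?_⟩
    rintro w ⟨s, rfl⟩ ε hε
    -- the key lower bound
    have hlow : ∀ a b : ℤ → Bool, a n₁ ≠ b n₁ →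
        (c₀ / (1 + c₀)) / 2 ^ (m₁ + 1) ≤ rho (Φ a) (Φ b) := by
      intro a b hab
      have hvaldiff : |Φ a t₁ - Φ b t₁| = c₀ := by
        rw [hΦapp, hΦapp]
        unfold spl
        rw [← hn₁def]
        cases ha : a n₁ <;> cases hb : b n₁ <;> rw [ha, hb] at hab <;> simp at hab ⊢
        all_goals simp only [hc₀def, abs_sub_comm]
      have hθ : c₀ ≤ theta (m₁ + 1) (Φ a) (Φ b) := by
        rw [← hvaldiff]
        refine le_csSup ?_ ⟨t₁, by exact_mod_cast ht₁mem, rfl⟩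
        have hcont : Continuous fun t => |Φ a t - Φ b t| :=
          ((Φ a).continuous.sub (Φ b).continuous).abs
        exact (isCompact_Icc.image hcont).bddAbove
      have hθ0 := theta_nonneg (m₁+1) (Φ a) (Φ b)
      refine le_trans ?_ (le_rho (Φ a) (Φ b) m₁)
      unfold rterm
      gcongr ?_ / 2 ^ (m₁ + 1)
      rw [div_le_div_iff₀ (by linarith) (by linarith)]
      nlinarith
    -- choose v
    obtain ⟨M, hM⟩ := exists_pow_lt_of_lt_one hε (by norm_num : (1:ℝ)/2 < 1)
    set N : ℤ := ⌈(M:ℝ) - t₀⌉ with hNdef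
    have hN : (M:ℝ) ≤ t₀ + N := by
      have := Int.le_ceil ((M:ℝ) - t₀)
      linarith
    set s' : ℤ → Bool := fun n => if n ≤ N then s n else !(s n) with hs'def
    refine ⟨Φ s', ⟨s', rfl⟩, ?_, ?_⟩
    · -- rho (Φ s') (Φ s) < ε
      refine lt_of_le_of_lt (rho_le_of_eqOn (Φ s') (Φ s) M ?_) hM
      intro t htmem
      show spl x t₀ s' t = spl x t₀ s t
      unfold spl
      have hfloor : ⌊t - t₀⌋ ≤ N := by
        have : t - t₀ < (N:ℝ) + 1 := by
          have := htmem.2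
          push_cast
          linarith
        have := Int.floor_lt.2 (by push_cast; linarith : t - t₀ < ((N + 1 : ℤ):ℝ))
        omega
      rw [hs'def]
      simp only [hfloor, if_pos]
    · -- separation after iteration
      refine ⟨(N - n₁).toNat + 1, le_add_self, ?_⟩
      set k : ℕ := (N - n₁).toNat + 1 with hkdef
      have hk : N < n₁ + k := by
        have h1 : (N - n₁ : ℤ) ≤ ((N - n₁).toNat : ℤ) := Int.self_le_toNat _
        push_cast
        omega
      rw [hshift_iter, hshift_iter]
      apply hlow
      intro hcontra
      rw [fshift_iterate_eq_iff] at hcontra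
      have hnle : ¬ (n₁ + (k:ℤ) ≤ N) := not_le.2 hk
      simp only [hs'def] at hcontra
      rw [if_neg hnle] at hcontra
      exact (Bool.not_ne_self _) hcontra
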